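/- arXiv:2207.12986 — 2 statements merged into one kernel-verified Lean document; each statement's English description precedes it below -/
import Mathlib

section
/- Let γ₁, γ₂ > 1, ρ₁, ρ₂, δ ≥ 0, β > 0 and γ ≥ 1. For non-negative integers j, k define α_{j,k} = min{ γ₁ 2^{-k} j^{ρ₁}, β γ₂ 2^{-j} 2^{-k} 2^{δk} k^{ρ₂} }. Then there is a constant c depending only on ρ₁, ρ₂, γ, δ such that ∑_{j,k ≥ 0} α_{j,k} ≤ c γ₁ (log₂(e + γ₂))^{1+ρ₁} + β/(2γ). -/
open Real

private lemma stmt0_pow2 (n : ℕ) : (2:ℝ) ^ (-(n:ℝ)) = (2⁻¹ : ℝ) ^ n := by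
  rw [Real.rpow_neg (by norm_num : (0:ℝ) ≤ 2), Real.rpow_natCast, ← inv_pow]

private lemma stmt0_halfpow (n : ℕ) :
    ENNReal.ofReal ((2⁻¹ : ℝ) ^ n) = ((2 : ENNReal)⁻¹) ^ n := by
  rw [ENNReal.ofReal_pow (by norm_num : (0:ℝ) ≤ 2⁻¹),
    ENNReal.ofReal_inv_of_pos (by norm_num : (0:ℝ) < 2), ENNReal.ofReal_ofNat]

private lemma stmt0_tail_geom (M : ℕ) :
    (∑' j : ℕ, if M ≤ j then ((2 : ENNReal)⁻¹) ^ j else 0)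
      = ((2 : ENNReal)⁻¹) ^ M * 2 := by
  have hinj : Function.Injective (fun i : ℕ => M + i) := fun a b h => by
    simpa using h
  have hsupp : Function.support (fun j : ℕ => if M ≤ j then ((2 : ENNReal)⁻¹) ^ j else 0)
      ⊆ Set.range (fun i : ℕ => M + i) := by
    intro j hj
    by_cases h : M ≤ j
    · exact ⟨j - M, show M + (j - M) = j by omega⟩
    · simp [h] at hj
  have h1 := hinj.tsum_eq hsupp
  rw [← h1]
  have h2 : ∀ i : ℕ, (if M ≤ M + i then ((2 : ENNReal)⁻¹) ^ (M + i) else 0)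
      = ((2 : ENNReal)⁻¹) ^ M * ((2 : ENNReal)⁻¹) ^ i := by
    intro i
    rw [if_pos (Nat.le_add_right _ _), pow_add]
  rw [tsum_congr h2, ENNReal.tsum_mul_left, ENNReal.tsum_geometric,
    ENNReal.one_sub_inv_two, inv_inv]

private noncomputable def stmt0_g (m : ℕ) (k : ℕ) : ℝ := ((k:ℝ) + 1) ^ m * (2⁻¹ : ℝ) ^ k

private lemma stmt0_g_nonneg (m k : ℕ) : 0 ≤ stmt0_g m k := by
  unfold stmt0_g
  positivity

private lemma stmt0_g_summable (m : ℕ) : Summable (stmt0_g m) := by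
  have h1 : Summable (fun n : ℕ => ((n:ℝ)) ^ m * (2⁻¹ : ℝ) ^ n) :=
    summable_pow_mul_geometric_of_norm_lt_one m
      (by rw [Real.norm_eq_abs, abs_of_pos (by norm_num : (0:ℝ) < 2⁻¹)]; norm_num)
  have h2 : Summable (fun n : ℕ => (((n + 1 : ℕ)):ℝ) ^ m * (2⁻¹ : ℝ) ^ (n + 1)) :=
    (summable_nat_add_iff (f := fun n : ℕ => ((n:ℝ)) ^ m * (2⁻¹ : ℝ) ^ n) 1).2 h1
  refine (h2.mul_left 2).congr ?_
  intro k
  unfold stmt0_g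
  push_cast
  ring

private lemma stmt0_innerF {ρ₁ c : ℝ} (hρ₁ : 0 ≤ ρ₁) (hc : 0 ≤ c) (Mk : ℕ) :
    (∑' j : ℕ, if j < Mk then ENNReal.ofReal (c * (j:ℝ) ^ ρ₁) else 0)
      ≤ ENNReal.ofReal ((Mk:ℝ) * (c * (Mk:ℝ) ^ ρ₁)) := by
  rw [tsum_eq_sum (s := Finset.range Mk) (fun j hj => if_neg (by simpa using hj))]
  calc ∑ j ∈ Finset.range Mk, (if j < Mk then ENNReal.ofReal (c * (j:ℝ) ^ ρ₁) else 0)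
      ≤ ∑ _j ∈ Finset.range Mk, ENNReal.ofReal (c * (Mk:ℝ) ^ ρ₁) := by
        apply Finset.sum_le_sum
        intro j hj
        rw [if_pos (Finset.mem_range.mp hj)]
        apply ENNReal.ofReal_le_ofReal
        have hjM : (j:ℝ) ≤ (Mk:ℝ) := by exact_mod_cast (Finset.mem_range.mp hj).le
        have hr : (j:ℝ) ^ ρ₁ ≤ (Mk:ℝ) ^ ρ₁ :=
          Real.rpow_le_rpow (Nat.cast_nonneg _) hjM hρ₁
        exact mul_le_mul_of_nonneg_left hr hc
    _ = (Mk : ENNReal) * ENNReal.ofReal (c * (Mk:ℝ) ^ ρ₁) := by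
        rw [Finset.sum_const, Finset.card_range, nsmul_eq_mul]
    _ = ENNReal.ofReal ((Mk:ℝ) * (c * (Mk:ℝ) ^ ρ₁)) := by
        rw [ENNReal.ofReal_mul (Nat.cast_nonneg _), ENNReal.ofReal_natCast]

private lemma stmt0_innerG {c : ℝ} (hc : 0 ≤ c) (Mk : ℕ) :
    (∑' j : ℕ, if Mk ≤ j then ENNReal.ofReal (c * (2:ℝ) ^ (-(j:ℝ))) else 0)
      = ENNReal.ofReal (c * ((2⁻¹ : ℝ) ^ Mk * 2)) := by
  have h1 : ∀ j : ℕ, (if Mk ≤ j then ENNReal.ofReal (c * (2:ℝ) ^ (-(j:ℝ))) else 0)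
      = ENNReal.ofReal c * (if Mk ≤ j then ((2 : ENNReal)⁻¹) ^ j else 0) := by
    intro j
    rw [mul_ite, mul_zero]
    by_cases h : Mk ≤ j
    · rw [if_pos h, if_pos h, ← stmt0_halfpow j, ← ENNReal.ofReal_mul hc, stmt0_pow2 j]
    · rw [if_neg h, if_neg h]
  rw [tsum_congr h1, ENNReal.tsum_mul_left, stmt0_tail_geom, ← stmt0_halfpow,
    ← ENNReal.ofReal_ofNat 2, ← ENNReal.ofReal_mul (by positivity),
    ← ENNReal.ofReal_mul hc]

private lemma stmt0_realF {ρ₁ L γ₁ : ℝ} (hρ₁ : 0 ≤ ρ₁) (hγ₁0 : 0 < γ₁) (hL1 : 1 ≤ L)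
    (m B N : ℕ) (hm1 : 1 + ρ₁ ≤ (m:ℝ)) (hN2L : (N:ℝ) ≤ 2 * L) (hB1 : 1 ≤ B) (k : ℕ) :
    ((N + B * (k + 1) : ℕ) : ℝ) * (γ₁ * (2:ℝ) ^ (-(k:ℝ)) * ((N + B * (k + 1) : ℕ) : ℝ) ^ ρ₁)
      ≤ (2 + (B:ℝ)) ^ (1 + ρ₁) * L ^ (1 + ρ₁) * γ₁ * stmt0_g m k := by
  set Mk : ℕ := N + B * (k + 1) with hMkdef
  have hMk0 : (0:ℝ) < (Mk : ℝ) := by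
    have : 0 < Mk := by
      have : 0 < B * (k + 1) := Nat.mul_pos hB1 (Nat.succ_pos k)
      omega
    exact_mod_cast this
  have e1 : (Mk : ℝ) * (γ₁ * (2:ℝ) ^ (-(k:ℝ)) * (Mk : ℝ) ^ ρ₁)
      = γ₁ * (2:ℝ) ^ (-(k:ℝ)) * (Mk : ℝ) ^ (ρ₁ + 1) := by
    rw [Real.rpow_add_one hMk0.ne']
    ring
  have hMcast : (Mk : ℝ) = (N:ℝ) + (B:ℝ) * ((k:ℝ) + 1) := by
    rw [hMkdef]
    push_cast
    ring
  have hk0 : (0:ℝ) ≤ (k:ℝ) := Nat.cast_nonneg k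
  have hk1 : (1:ℝ) ≤ (k:ℝ) + 1 := by linarith
  have hBnn : (0:ℝ) ≤ (B:ℝ) := Nat.cast_nonneg B
  have hL0 : (0:ℝ) ≤ L := by linarith
  have hMle : (Mk : ℝ) ≤ (2 + (B:ℝ)) * L * ((k:ℝ) + 1) := by
    rw [hMcast]
    have t1 : (N:ℝ) ≤ 2 * L * ((k:ℝ) + 1) := by
      nlinarith [mul_nonneg hL0 hk0]
    have t2 : (B:ℝ) * ((k:ℝ) + 1) ≤ (B:ℝ) * L * ((k:ℝ) + 1) := by
      nlinarith [mul_nonneg (mul_nonneg hBnn (by linarith : (0:ℝ) ≤ L - 1)) (by linarith : (0:ℝ) ≤ (k:ℝ) + 1)]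
    nlinarith [t1, t2]
  have h2' : (Mk : ℝ) ^ (ρ₁ + 1) ≤ ((2 + (B:ℝ)) * L * ((k:ℝ) + 1)) ^ (ρ₁ + 1) :=
    Real.rpow_le_rpow hMk0.le hMle (by linarith)
  have h3 : ((2 + (B:ℝ)) * L * ((k:ℝ) + 1)) ^ (ρ₁ + 1)
      = (2 + (B:ℝ)) ^ (ρ₁ + 1) * L ^ (ρ₁ + 1) * ((k:ℝ) + 1) ^ (ρ₁ + 1) := by
    rw [Real.mul_rpow (by positivity) (by positivity),
      Real.mul_rpow (by positivity) (by positivity)]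
  have h4 : ((k:ℝ) + 1) ^ (ρ₁ + 1) ≤ ((k:ℝ) + 1) ^ (m:ℝ) :=
    Real.rpow_le_rpow_of_exponent_le hk1 (by linarith)
  have h5 : ((k:ℝ) + 1) ^ (m:ℝ) = ((k:ℝ) + 1) ^ m := Real.rpow_natCast _ m
  rw [e1, stmt0_pow2 k]
  have hb : (Mk : ℝ) ^ (ρ₁ + 1)
      ≤ (2 + (B:ℝ)) ^ (ρ₁ + 1) * L ^ (ρ₁ + 1) * ((k:ℝ) + 1) ^ m := by
    calc (Mk : ℝ) ^ (ρ₁ + 1) ≤ ((2 + (B:ℝ)) * L * ((k:ℝ) + 1)) ^ (ρ₁ + 1) := h2'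
    _ = (2 + (B:ℝ)) ^ (ρ₁ + 1) * L ^ (ρ₁ + 1) * ((k:ℝ) + 1) ^ (ρ₁ + 1) := h3
    _ ≤ (2 + (B:ℝ)) ^ (ρ₁ + 1) * L ^ (ρ₁ + 1) * ((k:ℝ) + 1) ^ m := by
        rw [← h5]
        have hp1 : (0:ℝ) ≤ (2 + (B:ℝ)) ^ (ρ₁ + 1) := (Real.rpow_pos_of_pos (by positivity) _).le
        have hp2 : (0:ℝ) ≤ L ^ (ρ₁ + 1) := (Real.rpow_pos_of_pos (by linarith) _).le
        exact mul_le_mul_of_nonneg_left h4 (mul_nonneg hp1 hp2)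
  calc γ₁ * (2⁻¹:ℝ) ^ k * (Mk : ℝ) ^ (ρ₁ + 1)
      ≤ γ₁ * (2⁻¹:ℝ) ^ k * ((2 + (B:ℝ)) ^ (ρ₁ + 1) * L ^ (ρ₁ + 1) * ((k:ℝ) + 1) ^ m) := by
        exact mul_le_mul_of_nonneg_left hb (by positivity)
    _ = (2 + (B:ℝ)) ^ (1 + ρ₁) * L ^ (1 + ρ₁) * γ₁ * stmt0_g m k := by
        rw [show (ρ₁ + 1 : ℝ) = 1 + ρ₁ by ring]
        unfold stmt0_g
        ring

private lemma stmt0_realG {ρ₂ δ γ γ₂ β : ℝ} (hρ₂ : 0 ≤ ρ₂) (hδ : 0 ≤ δ) (hγ : 1 ≤ γ)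
    (hγ₂0 : 0 < γ₂) (hβ : 0 < β) (B N : ℕ)
    (hBge : δ + ρ₂ + 4 + Real.logb 2 γ ≤ (B:ℝ)) (hγ₂N : γ₂ ≤ (2:ℝ) ^ (N:ℝ)) (k : ℕ) :
    (β * γ₂ * (2:ℝ) ^ (-(k:ℝ)) * (2:ℝ) ^ (δ * (k:ℝ)) * (k:ℝ) ^ ρ₂)
        * ((2⁻¹:ℝ) ^ (N + B * (k + 1)) * 2)
      ≤ β / (8 * γ) * (2⁻¹:ℝ) ^ k := by
  have hγpos : (0:ℝ) < γ := lt_of_lt_of_le one_pos hγ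
  have hlogγ : 0 ≤ Real.logb 2 γ := Real.logb_nonneg one_lt_two hγ
  have hk0 : (0:ℝ) ≤ (k:ℝ) := Nat.cast_nonneg k
  have hkρ : (k:ℝ) ^ ρ₂ ≤ (2:ℝ) ^ (ρ₂ * (k:ℝ)) := by
    have hk2 : (k:ℝ) ≤ (2:ℝ) ^ ((k:ℝ)) := by
      rw [Real.rpow_natCast]
      exact_mod_cast (Nat.lt_two_pow_self (n := k)).le
    calc (k:ℝ) ^ ρ₂ ≤ ((2:ℝ) ^ ((k:ℝ))) ^ ρ₂ := Real.rpow_le_rpow hk0 hk2 hρ₂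
    _ = (2:ℝ) ^ ((k:ℝ) * ρ₂) := by rw [← Real.rpow_mul (by norm_num : (0:ℝ) ≤ 2)]
    _ = (2:ℝ) ^ (ρ₂ * (k:ℝ)) := by rw [mul_comm]
  have hMrpow : (2⁻¹:ℝ) ^ (N + B * (k + 1)) = (2:ℝ) ^ (-((N + B * (k + 1) : ℕ):ℝ)) :=
    (stmt0_pow2 _).symm
  have hMcast : ((N + B * (k + 1) : ℕ) : ℝ) = (N:ℝ) + (B:ℝ) * ((k:ℝ) + 1) := by
    push_cast
    ring
  have split : (2:ℝ) ^ (-((N + B * (k + 1) : ℕ):ℝ))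
      = (2:ℝ) ^ (-(N:ℝ)) * (2:ℝ) ^ (-(B:ℝ) * ((k:ℝ) + 1)) := by
    rw [← Real.rpow_add two_pos]
    congr 1
    rw [hMcast]
    ring
  have hγ₂2N : γ₂ * (2:ℝ) ^ (-(N:ℝ)) ≤ 1 := by
    have h2N : (0:ℝ) < (2:ℝ) ^ ((N:ℝ)) := Real.rpow_pos_of_pos two_pos _
    rw [Real.rpow_neg (by norm_num : (0:ℝ) ≤ 2)]
    calc γ₂ * ((2:ℝ) ^ ((N:ℝ)))⁻¹ ≤ (2:ℝ) ^ ((N:ℝ)) * ((2:ℝ) ^ ((N:ℝ)))⁻¹ :=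
          mul_le_mul_of_nonneg_right hγ₂N (by positivity)
    _ = 1 := mul_inv_cancel₀ h2N.ne'
  have hBbound : (2:ℝ) ^ (-(B:ℝ) * ((k:ℝ) + 1))
      ≤ γ⁻¹ * (2:ℝ) ^ (-(δ + ρ₂ + 4) * ((k:ℝ) + 1)) := by
    have e : γ⁻¹ = (2:ℝ) ^ (-Real.logb 2 γ) := by
      rw [Real.rpow_neg (by norm_num : (0:ℝ) ≤ 2), Real.rpow_logb two_pos (by norm_num) hγpos]
    rw [e, ← Real.rpow_add two_pos]
    apply Real.rpow_le_rpow_of_exponent_le one_le_two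
    nlinarith [mul_le_mul_of_nonneg_right hBge (by linarith : (0:ℝ) ≤ (k:ℝ) + 1),
      mul_nonneg hlogγ hk0]
  have merge : (2:ℝ) ^ (-(k:ℝ)) * (2:ℝ) ^ (δ * (k:ℝ)) * (2:ℝ) ^ (ρ₂ * (k:ℝ))
      * (2:ℝ) ^ (-(δ + ρ₂ + 4) * ((k:ℝ) + 1)) = (2:ℝ) ^ (-(k:ℝ) * 5 - (δ + ρ₂ + 4)) := by
    rw [← Real.rpow_add two_pos, ← Real.rpow_add two_pos, ← Real.rpow_add two_pos]
    congr 1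
    ring
  have hexp : (2:ℝ) ^ (-(k:ℝ) * 5 - (δ + ρ₂ + 4)) ≤ (2:ℝ) ^ (-(k:ℝ)) * 16⁻¹ := by
    have e4 : (2:ℝ) ^ (-(k:ℝ)) * 16⁻¹ = (2:ℝ) ^ (-(k:ℝ) + (-4)) := by
      rw [Real.rpow_add two_pos]
      congr 1
      rw [show (-4:ℝ) = -((4:ℕ):ℝ) by norm_num,
        Real.rpow_neg (by norm_num : (0:ℝ) ≤ 2), Real.rpow_natCast]
      norm_num
    rw [e4]
    apply Real.rpow_le_rpow_of_exponent_le one_le_two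
    linarith
  have hp1 : (0:ℝ) ≤ (2:ℝ) ^ (-(k:ℝ)) := (Real.rpow_pos_of_pos two_pos _).le
  have hp2 : (0:ℝ) ≤ (2:ℝ) ^ (δ * (k:ℝ)) := (Real.rpow_pos_of_pos two_pos _).le
  have hp3 : (0:ℝ) ≤ (k:ℝ) ^ ρ₂ := Real.rpow_nonneg hk0 _
  have hp4 : (0:ℝ) ≤ (2:ℝ) ^ (-(B:ℝ) * ((k:ℝ) + 1)) := (Real.rpow_pos_of_pos two_pos _).le
  calc (β * γ₂ * (2:ℝ) ^ (-(k:ℝ)) * (2:ℝ) ^ (δ * (k:ℝ)) * (k:ℝ) ^ ρ₂)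
          * ((2⁻¹:ℝ) ^ (N + B * (k + 1)) * 2)
      = 2 * β * (γ₂ * (2:ℝ) ^ (-(N:ℝ)))
          * ((2:ℝ) ^ (-(k:ℝ)) * (2:ℝ) ^ (δ * (k:ℝ)) * (k:ℝ) ^ ρ₂
            * (2:ℝ) ^ (-(B:ℝ) * ((k:ℝ) + 1))) := by
        rw [hMrpow, split]
        ring
    _ ≤ 2 * β * 1 * ((2:ℝ) ^ (-(k:ℝ)) * (2:ℝ) ^ (δ * (k:ℝ)) * (2:ℝ) ^ (ρ₂ * (k:ℝ))
            * (γ⁻¹ * (2:ℝ) ^ (-(δ + ρ₂ + 4) * ((k:ℝ) + 1)))) := by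
        have hstep : (2:ℝ) ^ (-(k:ℝ)) * (2:ℝ) ^ (δ * (k:ℝ)) * (k:ℝ) ^ ρ₂
              * (2:ℝ) ^ (-(B:ℝ) * ((k:ℝ) + 1))
            ≤ (2:ℝ) ^ (-(k:ℝ)) * (2:ℝ) ^ (δ * (k:ℝ)) * (2:ℝ) ^ (ρ₂ * (k:ℝ))
              * (γ⁻¹ * (2:ℝ) ^ (-(δ + ρ₂ + 4) * ((k:ℝ) + 1))) := by
          apply mul_le_mul
          · exact mul_le_mul_of_nonneg_left hkρ (by positivity)
          · exact hBbound
          · exact hp4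
          · positivity
        have hfirst : 2 * β * (γ₂ * (2:ℝ) ^ (-(N:ℝ))) ≤ 2 * β * 1 :=
          mul_le_mul_of_nonneg_left hγ₂2N (by positivity)
        have hnn1 : (0:ℝ) ≤ (2:ℝ) ^ (-(k:ℝ)) * (2:ℝ) ^ (δ * (k:ℝ)) * (k:ℝ) ^ ρ₂
            * (2:ℝ) ^ (-(B:ℝ) * ((k:ℝ) + 1)) := by positivity
        have hnn2 : (0:ℝ) ≤ 2 * β * 1 := by positivity
        exact mul_le_mul hfirst hstep hnn1 hnn2
    _ = 2 * β * γ⁻¹ * ((2:ℝ) ^ (-(k:ℝ)) * (2:ℝ) ^ (δ * (k:ℝ)) * (2:ℝ) ^ (ρ₂ * (k:ℝ))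
            * (2:ℝ) ^ (-(δ + ρ₂ + 4) * ((k:ℝ) + 1))) := by ring
    _ = 2 * β * γ⁻¹ * (2:ℝ) ^ (-(k:ℝ) * 5 - (δ + ρ₂ + 4)) := by rw [merge]
    _ ≤ 2 * β * γ⁻¹ * ((2:ℝ) ^ (-(k:ℝ)) * 16⁻¹) := by
        apply mul_le_mul_of_nonneg_left hexp (by positivity)
    _ = β / (8 * γ) * (2⁻¹:ℝ) ^ k := by
        rw [stmt0_pow2 k]
        field_simp
        ring

set_option maxHeartbeats 1000000 in
/-- summation lemma (Lemma CRRlema1). -/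
theorem stmt0 (ρ₁ ρ₂ δ γ : ℝ) (hρ₁ : 0 ≤ ρ₁) (hρ₂ : 0 ≤ ρ₂) (hδ : 0 ≤ δ) (hγ : 1 ≤ γ) :
    ∃ c : ℝ, 0 < c ∧ ∀ γ₁ γ₂ β : ℝ, 1 < γ₁ → 1 < γ₂ → 0 < β →
      (∑' (j : ℕ) (k : ℕ), ENNReal.ofReal
          (min (γ₁ * (2:ℝ) ^ (-(k:ℝ)) * (j:ℝ) ^ ρ₁)
               (β * γ₂ * (2:ℝ) ^ (-(j:ℝ)) * (2:ℝ) ^ (-(k:ℝ)) * (2:ℝ) ^ (δ * (k:ℝ)) *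
                 (k:ℝ) ^ ρ₂)))
        ≤ ENNReal.ofReal
            (c * γ₁ * (Real.logb 2 (Real.exp 1 + γ₂)) ^ (1 + ρ₁) + β / (2 * γ)) := by
  have h2 : (1:ℝ) < 2 := one_lt_two
  have hγpos : (0:ℝ) < γ := lt_of_lt_of_le one_pos hγ
  have hlogγ : 0 ≤ Real.logb 2 γ := Real.logb_nonneg h2 hγ
  set m : ℕ := ⌈1 + ρ₁⌉₊ with hmdef
  have hm1 : 1 + ρ₁ ≤ (m:ℝ) := Nat.le_ceil _
  set B : ℕ := ⌈δ + ρ₂ + 4 + Real.logb 2 γ⌉₊ with hBdef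
  have hBge : δ + ρ₂ + 4 + Real.logb 2 γ ≤ (B:ℝ) := Nat.le_ceil _
  have hB4 : (4:ℝ) ≤ (B:ℝ) := by linarith
  have hB1 : 1 ≤ B := by exact_mod_cast le_trans (by norm_num : (1:ℝ) ≤ 4) hB4
  set S : ℝ := ∑' k, stmt0_g m k with hSdef
  have hg := stmt0_g_summable m
  have hS1 : 1 ≤ S := by
    have h := Summable.le_tsum hg 0 (fun i _ => stmt0_g_nonneg m i)
    have hg0 : stmt0_g m 0 = 1 := by
      unfold stmt0_g
      norm_num
    rw [hg0] at h
    rw [hSdef]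
    exact h
  have hSpos : 0 < S := lt_of_lt_of_le one_pos hS1
  have hc2B : (0:ℝ) < (2 + (B:ℝ)) ^ (1 + ρ₁) := Real.rpow_pos_of_pos (by positivity) _
  refine ⟨(2 + (B:ℝ)) ^ (1 + ρ₁) * S, mul_pos hc2B hSpos, ?_⟩
  intro γ₁ γ₂ β hγ₁ hγ₂ hβ
  have hγ₁0 : (0:ℝ) < γ₁ := lt_trans one_pos hγ₁
  have hγ₂0 : (0:ℝ) < γ₂ := lt_trans one_pos hγ₂
  set L : ℝ := Real.logb 2 (Real.exp 1 + γ₂) with hLdef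
  have hE : (2:ℝ) ≤ Real.exp 1 + γ₂ := by
    have := Real.exp_one_gt_d9
    linarith
  have hL1 : (1:ℝ) ≤ L := by
    rw [hLdef, Real.le_logb_iff_rpow_le h2 (by linarith)]
    rwa [Real.rpow_one]
  set N : ℕ := ⌈Real.logb 2 γ₂⌉₊ with hNdef
  have hlogγ₂ : 0 ≤ Real.logb 2 γ₂ := Real.logb_nonneg h2 hγ₂.le
  have hγ₂N : γ₂ ≤ (2:ℝ) ^ (N:ℝ) := by
    calc γ₂ = (2:ℝ) ^ (Real.logb 2 γ₂) := (Real.rpow_logb two_pos (by norm_num) hγ₂0).symm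
    _ ≤ (2:ℝ) ^ (N:ℝ) := Real.rpow_le_rpow_of_exponent_le h2.le (Nat.le_ceil _)
  have hlogle : Real.logb 2 γ₂ ≤ L := by
    rw [hLdef]
    apply Real.logb_le_logb_of_le h2 hγ₂0
    have := Real.exp_pos 1
    linarith
  have hN2L : (N:ℝ) ≤ 2 * L := by
    have := Nat.ceil_lt_add_one hlogγ₂
    linarith
  -- pointwise splitting
  have key : ∀ j k : ℕ,
      ENNReal.ofReal (min (γ₁ * (2:ℝ) ^ (-(k:ℝ)) * (j:ℝ) ^ ρ₁)
          (β * γ₂ * (2:ℝ) ^ (-(j:ℝ)) * (2:ℝ) ^ (-(k:ℝ)) * (2:ℝ) ^ (δ * (k:ℝ)) * (k:ℝ) ^ ρ₂))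
        ≤ (if j < N + B * (k + 1) then
              ENNReal.ofReal (γ₁ * (2:ℝ) ^ (-(k:ℝ)) * (j:ℝ) ^ ρ₁) else 0)
          + (if N + B * (k + 1) ≤ j then
              ENNReal.ofReal (β * γ₂ * (2:ℝ) ^ (-(j:ℝ)) * (2:ℝ) ^ (-(k:ℝ)) *
                (2:ℝ) ^ (δ * (k:ℝ)) * (k:ℝ) ^ ρ₂) else 0) := by
    intro j k
    by_cases h : j < N + B * (k + 1)
    · rw [if_pos h, if_neg (by omega)]
      exact le_trans (ENNReal.ofReal_le_ofReal (min_le_left _ _)) le_self_add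
    · rw [if_neg h, if_pos (by omega)]
      exact le_trans (ENNReal.ofReal_le_ofReal (min_le_right _ _)) le_add_self
  -- the F part
  have hF : (∑' (j : ℕ) (k : ℕ), (if j < N + B * (k + 1) then
        ENNReal.ofReal (γ₁ * (2:ℝ) ^ (-(k:ℝ)) * (j:ℝ) ^ ρ₁) else 0))
      ≤ ENNReal.ofReal ((2 + (B:ℝ)) ^ (1 + ρ₁) * S * γ₁ * L ^ (1 + ρ₁)) := by
    rw [ENNReal.tsum_comm]
    have inner : ∀ k : ℕ,
        (∑' j : ℕ, (if j < N + B * (k + 1) then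
            ENNReal.ofReal (γ₁ * (2:ℝ) ^ (-(k:ℝ)) * (j:ℝ) ^ ρ₁) else 0))
          ≤ ENNReal.ofReal ((2 + (B:ℝ)) ^ (1 + ρ₁) * L ^ (1 + ρ₁) * γ₁ * stmt0_g m k) := by
      intro k
      refine le_trans (stmt0_innerF hρ₁ (by positivity) (N + B * (k + 1))) ?_
      exact ENNReal.ofReal_le_ofReal (stmt0_realF hρ₁ hγ₁0 hL1 m B N hm1 hN2L hB1 k)
    refine le_trans (ENNReal.tsum_le_tsum inner) ?_
    have hCnn : (0:ℝ) ≤ (2 + (B:ℝ)) ^ (1 + ρ₁) * L ^ (1 + ρ₁) * γ₁ :=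
      mul_nonneg (mul_nonneg hc2B.le (Real.rpow_nonneg (by linarith) _)) hγ₁0.le
    have heq : (∑' k : ℕ, ENNReal.ofReal
          ((2 + (B:ℝ)) ^ (1 + ρ₁) * L ^ (1 + ρ₁) * γ₁ * stmt0_g m k))
        = ENNReal.ofReal ((2 + (B:ℝ)) ^ (1 + ρ₁) * L ^ (1 + ρ₁) * γ₁ * S) := by
      rw [← ENNReal.ofReal_tsum_of_nonneg
        (fun k => mul_nonneg hCnn (stmt0_g_nonneg m k)) (hg.mul_left _), tsum_mul_left, hSdef]
    rw [heq]
    apply ENNReal.ofReal_le_ofReal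
    apply le_of_eq
    ring
  -- the G part
  have hG : (∑' (j : ℕ) (k : ℕ), (if N + B * (k + 1) ≤ j then
        ENNReal.ofReal (β * γ₂ * (2:ℝ) ^ (-(j:ℝ)) * (2:ℝ) ^ (-(k:ℝ)) *
          (2:ℝ) ^ (δ * (k:ℝ)) * (k:ℝ) ^ ρ₂) else 0))
      ≤ ENNReal.ofReal (β / (2 * γ)) := by
    rw [ENNReal.tsum_comm]
    have inner : ∀ k : ℕ,
        (∑' j : ℕ, (if N + B * (k + 1) ≤ j then
            ENNReal.ofReal (β * γ₂ * (2:ℝ) ^ (-(j:ℝ)) * (2:ℝ) ^ (-(k:ℝ)) *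
              (2:ℝ) ^ (δ * (k:ℝ)) * (k:ℝ) ^ ρ₂) else 0))
          ≤ ENNReal.ofReal (β / (8 * γ) * (2⁻¹:ℝ) ^ k) := by
      intro k
      have hb : ∀ j : ℕ, β * γ₂ * (2:ℝ) ^ (-(j:ℝ)) * (2:ℝ) ^ (-(k:ℝ)) *
            (2:ℝ) ^ (δ * (k:ℝ)) * (k:ℝ) ^ ρ₂
          = (β * γ₂ * (2:ℝ) ^ (-(k:ℝ)) * (2:ℝ) ^ (δ * (k:ℝ)) * (k:ℝ) ^ ρ₂)
              * (2:ℝ) ^ (-(j:ℝ)) := fun j => by ring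
      have hCb0 : (0:ℝ) ≤ β * γ₂ * (2:ℝ) ^ (-(k:ℝ)) * (2:ℝ) ^ (δ * (k:ℝ)) * (k:ℝ) ^ ρ₂ := by
        have : (0:ℝ) ≤ (k:ℝ) ^ ρ₂ := Real.rpow_nonneg (Nat.cast_nonneg k) _
        positivity
      have hcong : (∑' j : ℕ, (if N + B * (k + 1) ≤ j then
            ENNReal.ofReal (β * γ₂ * (2:ℝ) ^ (-(j:ℝ)) * (2:ℝ) ^ (-(k:ℝ)) *
              (2:ℝ) ^ (δ * (k:ℝ)) * (k:ℝ) ^ ρ₂) else 0))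
          = (∑' j : ℕ, (if N + B * (k + 1) ≤ j then
            ENNReal.ofReal ((β * γ₂ * (2:ℝ) ^ (-(k:ℝ)) * (2:ℝ) ^ (δ * (k:ℝ)) * (k:ℝ) ^ ρ₂)
              * (2:ℝ) ^ (-(j:ℝ))) else 0)) := by
        apply tsum_congr
        intro j
        rw [hb j]
      rw [hcong, stmt0_innerG hCb0]
      exact ENNReal.ofReal_le_ofReal
        (stmt0_realG hρ₂ hδ hγ hγ₂0 hβ B N hBge hγ₂N k)
    refine le_trans (ENNReal.tsum_le_tsum inner) ?_
    have heq : (∑' k : ℕ, ENNReal.ofReal (β / (8 * γ) * (2⁻¹:ℝ) ^ k))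
        = ENNReal.ofReal (β / (8 * γ) * 2) := by
      rw [← ENNReal.ofReal_tsum_of_nonneg (fun k => by positivity)
        ((summable_geometric_of_lt_one (by norm_num) (by norm_num)).mul_left _),
        tsum_mul_left, tsum_geometric_inv_two]
    rw [heq]
    apply ENNReal.ofReal_le_ofReal
    rw [div_mul_eq_mul_div, div_le_div_iff₀ (by positivity) (by positivity)]
    nlinarith [mul_pos hβ hγpos]
  -- assembling
  refine le_trans (ENNReal.tsum_le_tsum fun j => ENNReal.tsum_le_tsum fun k => key j k) ?_
  have hsplit : (∑' (j : ℕ) (k : ℕ),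
        ((if j < N + B * (k + 1) then
            ENNReal.ofReal (γ₁ * (2:ℝ) ^ (-(k:ℝ)) * (j:ℝ) ^ ρ₁) else 0)
          + (if N + B * (k + 1) ≤ j then
            ENNReal.ofReal (β * γ₂ * (2:ℝ) ^ (-(j:ℝ)) * (2:ℝ) ^ (-(k:ℝ)) *
              (2:ℝ) ^ (δ * (k:ℝ)) * (k:ℝ) ^ ρ₂) else 0)))
      = (∑' (j : ℕ) (k : ℕ), (if j < N + B * (k + 1) then
            ENNReal.ofReal (γ₁ * (2:ℝ) ^ (-(k:ℝ)) * (j:ℝ) ^ ρ₁) else 0))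
        + (∑' (j : ℕ) (k : ℕ), (if N + B * (k + 1) ≤ j then
            ENNReal.ofReal (β * γ₂ * (2:ℝ) ^ (-(j:ℝ)) * (2:ℝ) ^ (-(k:ℝ)) *
              (2:ℝ) ^ (δ * (k:ℝ)) * (k:ℝ) ^ ρ₂) else 0)) := by
    simp only [ENNReal.tsum_add]
  rw [hsplit]
  refine le_trans (add_le_add hF hG) ?_
  have hnn1 : (0:ℝ) ≤ (2 + (B:ℝ)) ^ (1 + ρ₁) * S * γ₁ * L ^ (1 + ρ₁) :=
    mul_nonneg (mul_nonneg (mul_nonneg hc2B.le hSpos.le) hγ₁0.le)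
      (Real.rpow_nonneg (by linarith) _)
  have hnn2 : (0:ℝ) ≤ β / (2 * γ) := by positivity
  rw [← ENNReal.ofReal_add hnn1 hnn2]
end

section
/- Let D be a dyadic system and S ⊂ D a Λ-Carleson family with Λ > 1. For every integer t ≥ 2, S can be decomposed as S = S₁ ∪ ⋯ ∪ S_t where each S_i is (1 + (Λ−1)/t)-Carleson. -/
open MeasureTheory
open scoped ENNReal

def IsCarleson {X : Type*} [MeasurableSpace X] (μ : Measure X) (S : Set (Set X))
    (Λ : ℝ) : Prop :=
  ∀ Q ∈ S, ∑' (P : {P : Set X // P ∈ S ∧ P ⊆ Q}), μ P.1 ≤ ENNReal.ofReal Λ * μ Q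

open scoped Classical

namespace Stmt12Aux

variable {X : Type*} [MeasurableSpace X]

/-- A coloring `c` is valid on a finite family `F` if at every `Q ∈ F`, the cubes of
`F` strictly inside `Q` with the same color as `Q`, together with `Q` itself,
have total mass at most `Λ' μ(Q)`. -/
def Valid (μ : Measure X) {t : ℕ} (Λ' : ℝ) (c : Set X → Fin t) (F : Finset (Set X)) : Prop :=
  ∀ Q ∈ F, (∑ P ∈ F.filter (fun P => P ⊂ Q ∧ c P = c Q), μ P) + μ Q
      ≤ ENNReal.ofReal Λ' * μ Q

/-- Any finite subfamily of `S` whose elements are subsets of `Q` (other than `Q`)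
has total mass (plus `μ Q`) at most `Λ μ Q`. -/
lemma total_le (μ : Measure X) (S : Set (Set X)) (Λ : ℝ) (hCar : IsCarleson μ S Λ)
    (Q : Set X) (hQ : Q ∈ S) (G : Finset (Set X)) (hG : ∀ P ∈ G, P ∈ S ∧ P ⊆ Q)
    (hQG : Q ∉ G) :
    (∑ P ∈ G, μ P) + μ Q ≤ ENNReal.ofReal Λ * μ Q := by
  have h1 : (∑ P ∈ G, μ P) + μ Q = ∑ P ∈ insert Q G, μ P := by
    rw [Finset.sum_insert hQG, add_comm]
  have h2 : ∀ P ∈ insert Q G, P ∈ S ∧ P ⊆ Q := by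
    intro P hP
    rcases Finset.mem_insert.mp hP with rfl | h
    · exact ⟨hQ, subset_rfl⟩
    · exact hG P h
  have h3 : ∑ P ∈ insert Q G, μ P
      ≤ ∑' (P : {P : Set X // P ∈ S ∧ P ⊆ Q}), μ P.1 := by
    have e : (∑' (P : {P : Set X // P ∈ S ∧ P ⊆ Q}), μ P.1)
        = ∑' P : Set X, Set.indicator {P : Set X | P ∈ S ∧ P ⊆ Q} (fun P => μ P) P :=
      tsum_subtype {P : Set X | P ∈ S ∧ P ⊆ Q} (fun P => μ P)
    rw [e]
    calc ∑ P ∈ insert Q G, μ P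
        = ∑ P ∈ insert Q G, {P : Set X | P ∈ S ∧ P ⊆ Q}.indicator (fun P => μ P) P := by
          apply Finset.sum_congr rfl
          intro P hP
          exact (Set.indicator_of_mem (show P ∈ {P : Set X | P ∈ S ∧ P ⊆ Q} from h2 P hP) (fun P => μ P)).symm
      _ ≤ ∑' P : Set X, {P : Set X | P ∈ S ∧ P ⊆ Q}.indicator (fun P => μ P) P :=
          ENNReal.sum_le_tsum (insert Q G)
  rw [h1]
  exact h3.trans (hCar Q hQ)

/-- Every finite subfamily of a `Λ`-Carleson family admits a valid `t`-coloring: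
color each cube by a color carrying minimal mass among its strict subcubes. -/
lemma finite_exists (μ : Measure X) (S : Set (Set X)) (Λ : ℝ) (hΛ : 1 < Λ)
    (hfin : ∀ Q ∈ S, μ Q < ∞) (hCar : IsCarleson μ S Λ) (t : ℕ) (ht : 2 ≤ t) :
    ∀ F : Finset (Set X), ↑F ⊆ S →
      ∃ c : Set X → Fin t, Valid μ (1 + (Λ - 1) / t) c F := by
  have htpos : (0:ℝ) < t := by positivity
  intro F hF
  induction F using Finset.strongInduction with
  | _ F ih =>
    rcases F.eq_empty_or_nonempty with rfl | hne
    · exact ⟨fun _ => ⟨0, by omega⟩, fun Q hQ => absurd hQ (Finset.notMem_empty Q)⟩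
    · -- pick a maximal element Q of F
      obtain ⟨Q, hQF, hQmax⟩ :=
        Set.Finite.exists_maximalFor id (↑F : Set (Set X)) F.finite_toSet hne
      have hQS : Q ∈ S := hF hQF
      have hQfin : μ Q < ∞ := hfin Q hQS
      obtain ⟨c, hc⟩ := ih (F.erase Q) (Finset.erase_ssubset hQF)
        (fun x hx => hF (Finset.mem_of_mem_erase hx))
      -- mass of color i strictly below Q
      set L : Fin t → ℝ≥0∞ :=
        fun i => ∑ P ∈ (F.erase Q).filter (fun P => P ⊂ Q ∧ c P = i), μ P with hL
      have htot : (∑ P ∈ (F.erase Q).filter (fun P => P ⊂ Q), μ P) + μ Q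
          ≤ ENNReal.ofReal Λ * μ Q := by
        apply total_le μ S Λ hCar Q hQS
        · intro P hP
          rcases Finset.mem_filter.mp hP with ⟨hP1, hP2⟩
          exact ⟨hF (Finset.mem_of_mem_erase hP1), hP2.le⟩
        · intro h
          exact absurd rfl (Finset.mem_filter.mp h).2.ne
      have hLsum : ∑ i : Fin t, L i = ∑ P ∈ (F.erase Q).filter (fun P => P ⊂ Q), μ P := by
        rw [hL]
        rw [← Finset.sum_fiberwise ((F.erase Q).filter (fun P => P ⊂ Q)) c μ]
        apply Finset.sum_congr rfl
        intro i _
        apply Finset.sum_congr _ (fun _ _ => rfl)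
        ext P
        simp only [Finset.mem_filter, and_assoc]
      -- choose the color of minimal mass
      obtain ⟨i₀, -, hi₀⟩ := Finset.exists_min_image Finset.univ L ⟨⟨0, by omega⟩,
        Finset.mem_univ _⟩
      have hkey : L i₀ + μ Q ≤ ENNReal.ofReal (1 + (Λ - 1) / t) * μ Q := by
        have h1 : (t : ℝ≥0∞) * L i₀ ≤ ∑ i : Fin t, L i := by
          calc (t : ℝ≥0∞) * L i₀ = ∑ _i : Fin t, L i₀ := by
                simp [Finset.sum_const, mul_comm]
            _ ≤ ∑ i : Fin t, L i := Finset.sum_le_sum fun i _ => hi₀ i (Finset.mem_univ i)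
        have htne : (t : ℝ≥0∞) ≠ 0 := by positivity
        have htne' : (t : ℝ≥0∞) ≠ ∞ := ENNReal.natCast_ne_top t
        have h2 : L i₀ ≤ (∑ i : Fin t, L i) / t := by
          rw [ENNReal.le_div_iff_mul_le (Or.inl htne) (Or.inl htne')]
          rwa [mul_comm]
        have h3 : ∑ i : Fin t, L i ≤ ENNReal.ofReal (Λ - 1) * μ Q := by
          rw [hLsum]
          have : ENNReal.ofReal Λ * μ Q = ENNReal.ofReal (Λ - 1) * μ Q + μ Q := by
            rw [show Λ = (Λ - 1) + 1 by ring, ENNReal.ofReal_add (by linarith) zero_le_one]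
            ring_nf
            rw [ENNReal.ofReal_one]
            ring
          rw [this] at htot
          exact ENNReal.le_of_add_le_add_right hQfin.ne htot
        have h4 : ENNReal.ofReal (1 + (Λ - 1) / t) * μ Q
            = ENNReal.ofReal ((Λ - 1) / t) * μ Q + μ Q := by
          rw [ENNReal.ofReal_add (by norm_num) (div_nonneg (by linarith) (by positivity)), add_mul,
            ENNReal.ofReal_one, one_mul, add_comm]
        rw [h4]
        apply add_le_add_left
        calc L i₀ ≤ (∑ i : Fin t, L i) / t := h2
          _ ≤ ENNReal.ofReal (Λ - 1) * μ Q / t := by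
              exact ENNReal.div_le_div_right h3 _
          _ = ENNReal.ofReal ((Λ - 1) / t) * μ Q := by
              rw [ENNReal.ofReal_div_of_pos htpos, ENNReal.ofReal_natCast,
                div_eq_mul_inv, div_eq_mul_inv, mul_right_comm]
      -- the coloring
      refine ⟨Function.update c Q i₀, ?_⟩
      intro R hRF
      by_cases hRQ : R = Q
      · subst hRQ
        have hset : (F.filter fun P => P ⊂ R ∧ Function.update c R i₀ P
            = Function.update c R i₀ R)
            = (F.erase R).filter (fun P => P ⊂ R ∧ c P = i₀) := by
          ext P
          simp only [Finset.mem_filter, Finset.mem_erase]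
          constructor
          · rintro ⟨hPF, hPR, hPc⟩
            refine ⟨⟨hPR.ne, hPF⟩, hPR, ?_⟩
            rwa [Function.update_of_ne hPR.ne, Function.update_self] at hPc
          · rintro ⟨⟨hne, hPF⟩, hPR, hPc⟩
            refine ⟨hPF, hPR, ?_⟩
            rwa [Function.update_of_ne hne, Function.update_self]
        rw [hset]
        exact hkey
      · have hcR : Function.update c Q i₀ R = c R := Function.update_of_ne hRQ _ _
        have hRF' : R ∈ F.erase Q := Finset.mem_erase.mpr ⟨hRQ, hRF⟩
        have hset : (F.filter fun P => P ⊂ R ∧ Function.update c Q i₀ P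
            = Function.update c Q i₀ R)
            = (F.erase Q).filter (fun P => P ⊂ R ∧ c P = c R) := by
          ext P
          simp only [Finset.mem_filter, Finset.mem_erase]
          constructor
          · rintro ⟨hPF, hPR, hPc⟩
            have hPQ : P ≠ Q := by
              rintro rfl
              exact hPR.ne (Set.Subset.antisymm hPR.subset (hQmax hRF hPR.subset))
            refine ⟨⟨hPQ, hPF⟩, hPR, ?_⟩
            rwa [Function.update_of_ne hPQ, hcR] at hPc
          · rintro ⟨⟨hPQ, hPF⟩, hPR, hPc⟩
            refine ⟨hPF, hPR, ?_⟩
            rwa [Function.update_of_ne hPQ, hcR]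
        rw [hset]
        exact hc R hRF'

end Stmt12Aux

/-- a `Λ`-Carleson family splits into `t` subfamilies, each
`(1 + (Λ-1)/t)`-Carleson. -/
theorem stmt12 (X : Type*) [MeasurableSpace X] (μ : Measure X) (D : Set (Set X))
    (hDnest : ∀ P ∈ D, ∀ Q ∈ D, P ⊆ Q ∨ Q ⊆ P ∨ Disjoint P Q)
    (hDm : ∀ Q ∈ D, MeasurableSet Q ∧ μ Q < ∞)
    (S : Set (Set X)) (hS : S ⊆ D) (hSc : S.Countable)
    (Λ : ℝ) (hΛ : 1 < Λ) (hCar : IsCarleson μ S Λ)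
    (t : ℕ) (ht : 2 ≤ t) :
    ∃ 𝒮 : Fin t → Set (Set X), (∀ i, 𝒮 i ⊆ S) ∧ (⋃ i, 𝒮 i) = S ∧
      ∀ i, IsCarleson μ (𝒮 i) (1 + (Λ - 1) / t) := by
  classical
  have hfin : ∀ Q ∈ S, μ Q < ∞ := fun Q hQ => (hDm Q (hS hQ)).2
  -- a valid coloring for each finite subfamily
  have hex := Stmt12Aux.finite_exists μ S Λ hΛ hfin hCar t ht
  set cf : Finset (Set X) → Set X → Fin t :=
    fun F => (hex (F.filter (· ∈ S)) (by
      intro P hP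
      exact (Finset.mem_filter.mp hP).2)).choose with hcf
  have hcfv : ∀ F, Stmt12Aux.Valid μ (1 + (Λ - 1) / t) (cf F) (F.filter (· ∈ S)) :=
    fun F => (hex (F.filter (· ∈ S)) (by
      intro P hP
      exact (Finset.mem_filter.mp hP).2)).choose_spec
  -- ultrafilter refining `atTop` on finite subfamilies
  set U : Ultrafilter (Finset (Set X)) := Ultrafilter.of Filter.atTop with hU
  have hUle : (U : Filter (Finset (Set X))) ≤ Filter.atTop := Ultrafilter.of_le _
  -- limit coloring
  have hcex : ∀ Q : Set X, ∃ i : Fin t, {F | cf F Q = i} ∈ U := by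
    intro Q
    have huniv : (⋃ i ∈ (Finset.univ : Finset (Fin t)), {F | cf F Q = i}) ∈ U := by
      have : (⋃ i ∈ (Finset.univ : Finset (Fin t)), {F | cf F Q = i})
          = Set.univ := by
        ext F
        simp only [Set.mem_iUnion, Set.mem_univ, iff_true, Set.mem_setOf_eq]
        exact ⟨cf F Q, Finset.mem_univ _, rfl⟩
      rw [this]
      exact Filter.univ_mem
    rcases (Ultrafilter.finite_biUnion_mem_iff (Finset.univ : Finset (Fin t)).finite_toSet).mp
      huniv with ⟨i, _, hi⟩
    exact ⟨i, hi⟩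
  set c : Set X → Fin t := fun Q => (hcex Q).choose with hc
  have hcspec : ∀ Q, {F | cf F Q = c Q} ∈ U := fun Q => (hcex Q).choose_spec
  refine ⟨fun i => {Q ∈ S | c Q = i}, fun i Q hQ => hQ.1, ?_, ?_⟩
  · ext Q
    simp only [Set.mem_iUnion, Set.mem_setOf_eq]
    exact ⟨fun ⟨i, h, _⟩ => h, fun h => ⟨c Q, h, rfl⟩⟩
  · intro i Q hQ
    obtain ⟨hQS, hQc⟩ := hQ
    -- reduce to finite subsums
    rw [ENNReal.tsum_eq_iSup_sum]
    apply iSup_le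
    intro s
    -- the relevant finite family
    set G : Finset (Set X) := insert Q (s.image Subtype.val) with hG
    have hGmem : ∀ P ∈ G, P ∈ S ∧ P ⊆ Q ∧ c P = i := by
      intro P hP
      rcases Finset.mem_insert.mp hP with rfl | hP
      · exact ⟨hQS, subset_rfl, hQc⟩
      · obtain ⟨x, hx, rfl⟩ := Finset.mem_image.mp hP
        exact ⟨x.2.1.1, x.2.2, x.2.1.2⟩
    -- find a large finite family on which the limit coloring is realized
    have hmem : ({F | G ⊆ F} ∩ ⋂ P ∈ G, {F | cf F P = c P}) ∈ U := by
      apply Filter.inter_mem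
      · exact hUle (Filter.mem_atTop G)
      · exact (Filter.biInter_mem G.finite_toSet).mpr fun P _ => hcspec P
    obtain ⟨F, hFG, hFc⟩ := Ultrafilter.nonempty_of_mem hmem
    simp only [Set.mem_iInter, Set.mem_setOf_eq] at hFc
    -- validity of `cf F` at `Q`
    have hQF : Q ∈ F.filter (· ∈ S) :=
      Finset.mem_filter.mpr ⟨hFG (Finset.mem_insert_self _ _), hQS⟩
    have hval := hcfv F Q hQF
    -- our sum is dominated by the valid-coloring sum
    have hsub : (s.image Subtype.val).erase Q ⊆ (F.filter (· ∈ S)).filter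
        (fun P => P ⊂ Q ∧ cf F P = cf F Q) := by
      intro P hP
      obtain ⟨hPQ, hPim⟩ := Finset.mem_erase.mp hP
      have hPG : P ∈ G := Finset.mem_insert_of_mem hPim
      obtain ⟨hPS, hPsub, hPc⟩ := hGmem P hPG
      have hQG : Q ∈ G := Finset.mem_insert_self _ _
      refine Finset.mem_filter.mpr ⟨Finset.mem_filter.mpr ⟨hFG hPG, hPS⟩, ?_, ?_⟩
      · exact hPsub.ssubset_of_ne hPQ
      · rw [hFc P hPG, hFc Q hQG, hPc, hQc]
    have himg : ∑ x ∈ s, μ x.1 = ∑ P ∈ s.image Subtype.val, μ P :=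
      (Finset.sum_image (fun x _ y _ h => Subtype.val_injective h)).symm
    have hsplit : ∑ P ∈ s.image Subtype.val, μ P
        ≤ (∑ P ∈ (s.image Subtype.val).erase Q, μ P) + μ Q := by
      by_cases hQi : Q ∈ s.image Subtype.val
      · rw [← Finset.sum_erase_add _ _ hQi]
      · rw [Finset.erase_eq_of_notMem hQi]
        exact le_add_right le_rfl
    calc ∑ x ∈ s, μ x.1 ≤ (∑ P ∈ (s.image Subtype.val).erase Q, μ P) + μ Q := by
          rw [himg]; exact hsplit
      _ ≤ (∑ P ∈ (F.filter (· ∈ S)).filter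
            (fun P => P ⊂ Q ∧ cf F P = cf F Q), μ P) + μ Q := by
          apply add_le_add_left
          exact Finset.sum_le_sum_of_subset hsub
      _ ≤ ENNReal.ofReal (1 + (Λ - 1) / ↑t) * μ Q := hval
end
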